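/- There exists a constant C > 0 such that for every integer n ≥ 2, every function f : Λ_n → ℝ with f ≥ 0, and every real t ≥ n², one has ∑_{x∈Λ_n} (exp(tΔ_n)f)(x) ≤ C·e^{−λ_𝟏(t − n²)}·∑_{x∈Λ_n} f(x), where exp(tΔ_n) is the matrix exponential of tΔ_n. (Probabilistically, ∑_x (exp(tΔ_n)f)(x) is the annealed expectation ∑_x E[f(S^{x}_{−t})] for the backwards-in-time random walk absorbed at ∂Λ_n.) -/

import Mathlib

open scoped BigOperators

namespace DGFFStmt

/-- The interior box `Λ_n = {1,…,n−1}²`, encoded with `Fin (n-1) × Fin (n-1)`;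
the lattice coordinate of `x` is `((x.1 : ℤ) + 1, (x.2 : ℤ) + 1)`. -/
abbrev Lam (n : ℕ) := Fin (n - 1) × Fin (n - 1)

/-- Lattice coordinates of a point of `Λ_n`. -/
def coord (n : ℕ) (x : Lam n) : ℤ × ℤ := (((x.1 : ℕ) : ℤ) + 1, ((x.2 : ℕ) : ℤ) + 1)

/-- Adjacency in `ℤ²`: Euclidean distance 1. -/
def adj (p q : ℤ × ℤ) : Prop := (p.1 - q.1) ^ 2 + (p.2 - q.2) ^ 2 = 1

instance (p q : ℤ × ℤ) : Decidable (adj p q) := by unfold adj; infer_instance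

/-- The discrete Laplacian `Δ_n` on `Λ_n`. -/
noncomputable def Delta (n : ℕ) : Matrix (Lam n) (Lam n) ℝ :=
  Matrix.of fun x y =>
    if x = y then -1 else if adj (coord n x) (coord n y) then (1 : ℝ) / 4 else 0

/-- `λ_𝟏 = 1 − cos(π/n)`. -/
noncomputable def lamOne (n : ℕ) : ℝ := 1 - Real.cos (Real.pi / n)


open Real Finset

lemma cosSum (n : ℕ) (hn : 2 ≤ n) (d : ℕ) (hd0 : 0 < d) (hd : d < 2*n) :
    ∑ j ∈ Finset.range n, Real.cos (Real.pi * d * j / n) = if Even d then 0 else 1 := by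
  have hn0 : (n:ℝ) ≠ 0 := by positivity
  set θ : ℝ := Real.pi * d / n with hθ
  have hθpos : 0 < θ := by
    apply div_pos (by positivity) (by positivity)
  have hθlt : θ < 2 * Real.pi := by
    rw [hθ, div_lt_iff₀ (by positivity : (0:ℝ) < n)]
    calc Real.pi * d < Real.pi * (2*n) := by
          apply mul_lt_mul_of_pos_left _ Real.pi_pos
          exact_mod_cast hd
      _ = 2 * Real.pi * n := by ring
  set z : ℂ := Complex.exp (θ * Complex.I) with hz
  have hz0 : z ≠ 0 := Complex.exp_ne_zero _
  have hz1 : z ≠ 1 := by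
    intro hone
    rw [hz, Complex.exp_eq_one_iff] at hone
    obtain ⟨k, hk⟩ := hone
    have hk' : (θ:ℂ) * Complex.I = ((k : ℂ) * (2*Real.pi)) * Complex.I := by rw [hk]; ring
    have : (θ : ℂ) = k * (2 * Real.pi) := mul_right_cancel₀ Complex.I_ne_zero hk'
    have hre : θ = k * (2 * Real.pi) := by exact_mod_cast this
    have hkpos : (0:ℝ) < k * (2*Real.pi) := hre ▸ hθpos
    have hklt : (k:ℝ) * (2*Real.pi) < 2*Real.pi := hre ▸ hθlt
    have h1 : 0 < (k:ℝ) := by nlinarith [Real.pi_pos]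
    have h2 : (k:ℝ) < 1 := by nlinarith [Real.pi_pos]
    have : (0:ℤ) < k := by exact_mod_cast h1
    have : (k:ℤ) < 1 := by exact_mod_cast h2
    omega
  have hzpow : ∀ m : ℕ, z ^ m = Complex.exp ((θ * m : ℝ) * Complex.I) := by
    intro m
    rw [hz, ← Complex.exp_nat_mul]
    congr 1
    push_cast
    ring
  have hre : ∀ m : ℕ, (z ^ m).re = Real.cos (Real.pi * d * m / n) := by
    intro m
    rw [hzpow m, Complex.exp_ofReal_mul_I_re]
    congr 1
    rw [hθ]; ring
  have hsum : ∑ j ∈ Finset.range n, Real.cos (Real.pi * d * j / n)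
      = (∑ j ∈ Finset.range n, z ^ j).re := by
    rw [Complex.re_sum]
    exact Finset.sum_congr rfl fun j _ => (hre j).symm
  have hzn : z ^ n = (-1 : ℂ) ^ d := by
    rw [hzpow n]
    have : (θ * n : ℝ) = Real.pi * d := by rw [hθ]; field_simp
    rw [this]
    have : ((Real.pi * d : ℝ) : ℂ) * Complex.I = d * (Real.pi * Complex.I) := by push_cast; ring
    rw [this, Complex.exp_nat_mul, Complex.exp_pi_mul_I]
  have hgeom : ∑ j ∈ Finset.range n, z ^ j = (z ^ n - 1) / (z - 1) := geom_sum_eq hz1 n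
  rcases Nat.even_or_odd d with he | ho
  · rw [hsum, hgeom, hzn, he.neg_one_pow, if_pos he]
    simp
  · rw [hsum, hgeom, hzn, ho.neg_one_pow, if_neg (Nat.not_even_iff_odd.mpr ho)]
    have hzc : (starRingEnd ℂ) z = z⁻¹ := by
      rw [hz, ← Complex.exp_conj, ← Complex.exp_neg]
      congr 1
      simp [Complex.conj_ofReal]
    set G : ℂ := (-1 - 1) / (z - 1) with hG
    have hzm1 : z - 1 ≠ 0 := sub_ne_zero.mpr hz1
    have hzim1 : z⁻¹ - 1 ≠ 0 := by
      rw [sub_ne_zero]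
      intro h
      apply hz1
      field_simp at h
      simpa using h.symm
    have hGconj : (starRingEnd ℂ) G = (-1-1) / (z⁻¹ - 1) := by
      rw [hG, map_div₀, map_sub, map_sub, hzc]
      simp
    have hkey : G + (starRingEnd ℂ) G = 2 := by
      rw [hGconj, hG, div_add_div _ _ hzm1 hzim1]
      rw [div_eq_iff (mul_ne_zero hzm1 hzim1)]
      field_simp
      ring
    have := Complex.add_conj G
    rw [hkey] at this
    have h2 : (2 : ℂ) = ((2 * G.re : ℝ) : ℂ) := this
    have : (2:ℝ) = 2 * G.re := by exact_mod_cast h2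
    linarith

lemma cosSumShift (n : ℕ) (hn : 2 ≤ n) (d : ℕ) (hd : d < 2*n) :
    ∑ j ∈ Finset.range (n-1), Real.cos (Real.pi * d * (j+1) / n)
      = (if d = 0 then (n:ℝ) else if Even d then 0 else 1) - 1 := by
  have hmn : n - 1 + 1 = n := by omega
  have hfull : ∑ j ∈ Finset.range n, Real.cos (Real.pi * d * j / n)
      = (∑ j ∈ Finset.range (n-1), Real.cos (Real.pi * d * (j+1) / n)) + Real.cos (Real.pi * d * 0 / n) := by
    have h := Finset.sum_range_succ' (fun j => Real.cos (Real.pi * d * j / n)) (n-1)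
    rw [hmn] at h
    rw [h]
    congr 1
    · apply Finset.sum_congr rfl
      intro j _
      push_cast
      ring_nf
    · norm_num
  rcases Nat.eq_zero_or_pos d with h0 | hpos
  · subst h0
    simp only [if_pos rfl]
    have : ∑ j ∈ Finset.range n, Real.cos (Real.pi * (0:ℕ) * j / n) = n := by
      simp
    rw [this] at hfull
    simp only [Nat.cast_zero] at hfull ⊢
    rw [eq_sub_iff_add_eq]
    rw [hfull]
    simp
  · rw [if_neg (by omega)]
    have := cosSum n hn d hpos hd
    rw [this] at hfull
    rw [eq_sub_iff_add_eq, hfull]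
    simp

lemma sinOrtho (n : ℕ) (hn : 2 ≤ n) (A B : ℕ) (hA : 1 ≤ A) (hAB : A ≤ B) (hB : B ≤ n-1) :
    ∑ j ∈ Finset.range (n-1),
        Real.sin (Real.pi * (j+1) * A / n) * Real.sin (Real.pi * (j+1) * B / n)
      = if A = B then (n:ℝ)/2 else 0 := by
  have hterm : ∀ u v : ℝ, Real.sin u * Real.sin v = (Real.cos (v - u) - Real.cos (u + v))/2 := by
    intro u v; rw [Real.cos_sub, Real.cos_add]; ring
  have hcast : ((B - A : ℕ) : ℝ) = (B:ℝ) - A := by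
    push_cast [Nat.cast_sub hAB]; ring
  have hsum : ∑ j ∈ Finset.range (n-1),
        Real.sin (Real.pi * (j+1) * A / n) * Real.sin (Real.pi * (j+1) * B / n)
      = ((∑ j ∈ Finset.range (n-1), Real.cos (Real.pi * (B-A:ℕ) * (j+1) / n))
        - ∑ j ∈ Finset.range (n-1), Real.cos (Real.pi * (A+B:ℕ) * (j+1) / n))/2 := by
    rw [← Finset.sum_sub_distrib]
    rw [Finset.sum_div]
    apply Finset.sum_congr rfl
    intro j _
    rw [hterm]
    congr 2
    · congr 1
      rw [hcast]
      ring
    · congr 1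
      push_cast
      ring
  rw [hsum, cosSumShift n hn (B-A) (by omega), cosSumShift n hn (A+B) (by omega)]
  rcases eq_or_lt_of_le hAB with he | hlt
  · subst he
    have h1 : A - A = 0 := by omega
    have h2 : A + A ≠ 0 := by omega
    have h3 : Even (A + A) := ⟨A, by ring⟩
    rw [h1]
    simp only [if_pos rfl, if_neg h2, if_pos h3]
    norm_num
  · have h1 : B - A ≠ 0 := by omega
    have h2 : A + B ≠ 0 := by omega
    have h3 : A ≠ B := by omega
    have hpar : Even (B - A) ↔ Even (A + B) := by
      rw [Nat.even_sub hAB, Nat.even_add]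
      tauto
    simp only [if_neg h1, if_neg h2, if_neg h3]
    by_cases hev : Even (B - A)
    · simp only [if_pos hev, if_pos (hpar.mp hev)]; ring
    · simp only [if_neg hev, if_neg (fun h => hev (hpar.mpr h))]; ring

noncomputable def sv (n : ℕ) (j a : Fin (n-1)) : ℝ :=
  Real.sin (Real.pi * ((j:ℕ)+1) * ((a:ℕ)+1) / n)

noncomputable def psi (n : ℕ) (j k : Fin (n-1)) : Lam n → ℝ :=
  fun x => sv n j x.1 * sv n k x.2

noncomputable def SZ (n : ℕ) (j : Fin (n-1)) (a : ℤ) : ℝ :=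
  Real.sin (Real.pi * ((j:ℕ)+1) * a / n)

noncomputable def sig (n : ℕ) (j : Fin (n-1)) : ℝ := ∑ a, sv n j a

noncomputable def cf (n : ℕ) (j : Fin (n-1)) : ℝ := (2/n) * sig n j

noncomputable def lam1 (n : ℕ) (j : Fin (n-1)) : ℝ := 1 - Real.cos (Real.pi * ((j:ℕ)+1) / n)

noncomputable def lam2 (n : ℕ) (j k : Fin (n-1)) : ℝ := (lam1 n j + lam1 n k) / 2

lemma sinOrthoF (n : ℕ) (hn : 2 ≤ n) (a b : Fin (n-1)) :
    ∑ j, sv n j a * sv n j b = if a = b then (n:ℝ)/2 else 0 := by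
  have key : ∀ A B : ℕ, 1 ≤ A → A ≤ B → B ≤ n - 1 →
      ∑ j, Real.sin (Real.pi * ((j : Fin (n-1)):ℕ).succ * A / n)
          * Real.sin (Real.pi * ((j : Fin (n-1)):ℕ).succ * B / n) = if A = B then (n:ℝ)/2 else 0 := by
    intro A B h1 h2 h3
    rw [Fin.sum_univ_eq_sum_range
      (fun j => Real.sin (Real.pi * (j:ℕ).succ * A / n) * Real.sin (Real.pi * (j:ℕ).succ * B / n)) (n-1)]
    rw [← sinOrtho n hn A B h1 h2 h3]
    apply Finset.sum_congr rfl
    intro j _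
    push_cast
    norm_num
  have hb1 : ((a:ℕ)+1 : ℕ) ≤ n - 1 := by omega
  have hb2 : ((b:ℕ)+1 : ℕ) ≤ n - 1 := by omega
  rcases le_total ((a:ℕ)+1) ((b:ℕ)+1) with h | h
  · have h2 := key ((a:ℕ)+1) ((b:ℕ)+1) (by omega) h hb2
    simp only [Nat.succ_eq_add_one] at h2
    push_cast at h2
    simp only [sv]
    push_cast
    rw [h2]
    by_cases hab : a = b
    · simp [hab]
    · rw [if_neg hab, if_neg (by simp only [Fin.ext_iff] at hab; omega)]
  · have h2 := key ((b:ℕ)+1) ((a:ℕ)+1) (by omega) h hb1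
    simp only [Nat.succ_eq_add_one] at h2
    push_cast at h2
    simp only [sv]
    push_cast
    have hcomm : ∀ j : Fin (n-1),
        Real.sin (Real.pi * ((j:ℕ)+1) * ((a:ℕ)+1) / n) * Real.sin (Real.pi * ((j:ℕ)+1) * ((b:ℕ)+1) / n)
      = Real.sin (Real.pi * ((j:ℕ)+1) * ((b:ℕ)+1) / n) * Real.sin (Real.pi * ((j:ℕ)+1) * ((a:ℕ)+1) / n) :=
      fun j => mul_comm _ _
    rw [Finset.sum_congr rfl (fun j _ => hcomm j), h2]
    by_cases hab : a = b
    · simp [hab]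
    · rw [if_neg (by simp only [Fin.ext_iff] at hab; omega), if_neg hab]

lemma sumMul (n : ℕ) (hn : 2 ≤ n) (a : Fin (n-1)) :
    ∑ j, sig n j * sv n j a = (n:ℝ)/2 := by
  have : ∀ j : Fin (n-1), sig n j * sv n j a = ∑ b, sv n j b * sv n j a := by
    intro j
    rw [sig, Finset.sum_mul]
  rw [Finset.sum_congr rfl (fun j _ => this j), Finset.sum_comm]
  have : ∀ b : Fin (n-1), ∑ j, sv n j b * sv n j a = if b = a then (n:ℝ)/2 else 0 :=
    fun b => sinOrthoF n hn b a
  rw [Finset.sum_congr rfl (fun b _ => this b)]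
  simp

lemma oneExpand (n : ℕ) (hn : 2 ≤ n) (x : Lam n) :
    ∑ j, ∑ k, (cf n j * cf n k) * psi n j k x = 1 := by
  have hn0 : (n:ℝ) ≠ 0 := by positivity
  have h1 : ∀ a : Fin (n-1), ∑ j, cf n j * sv n j a = 1 := by
    intro a
    have : ∀ j : Fin (n-1), cf n j * sv n j a = (2/n) * (sig n j * sv n j a) := by
      intro j; rw [cf]; ring
    rw [Finset.sum_congr rfl (fun j _ => this j), ← Finset.mul_sum, sumMul n hn a]
    field_simp
  have expand : ∑ j, ∑ k, (cf n j * cf n k) * psi n j k x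
      = (∑ j, cf n j * sv n j x.1) * (∑ k, cf n k * sv n k x.2) := by
    rw [Finset.sum_mul_sum]
    apply Finset.sum_congr rfl
    intro j _
    apply Finset.sum_congr rfl
    intro k _
    rw [psi]
    ring
  rw [expand, h1, h1, mul_one]

lemma sv_eq_SZ (n : ℕ) (j a : Fin (n-1)) : sv n j a = SZ n j ((a:ℕ)+1) := by
  rw [sv, SZ]; push_cast; ring_nf

lemma SZ_zero (n : ℕ) (j : Fin (n-1)) : SZ n j 0 = 0 := by simp [SZ]

lemma SZ_n (n : ℕ) (hn : 2 ≤ n) (j : Fin (n-1)) : SZ n j (n : ℤ) = 0 := by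
  have hn0 : (n:ℝ) ≠ 0 := by positivity
  rw [SZ]
  have : Real.pi * ((j:ℕ)+1) * (n:ℤ) / n = ((j:ℕ)+1 : ℕ) * Real.pi := by
    push_cast; field_simp
  rw [this, Real.sin_nat_mul_pi]

lemma SZ_rec (n : ℕ) (j : Fin (n-1)) (a : ℤ) :
    SZ n j (a - 1) + SZ n j (a + 1)
      = 2 * Real.cos (Real.pi * ((j:ℕ)+1) / n) * SZ n j a := by
  simp only [SZ]
  have h1 : Real.pi * ((j:ℕ)+1) * ((a:ℤ) - 1 : ℤ) / n
      = Real.pi * ((j:ℕ)+1) * a / n - Real.pi * ((j:ℕ)+1) / n := by push_cast; ring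
  have h2 : Real.pi * ((j:ℕ)+1) * ((a:ℤ) + 1 : ℤ) / n
      = Real.pi * ((j:ℕ)+1) * a / n + Real.pi * ((j:ℕ)+1) / n := by push_cast; ring
  rw [h1, h2, Real.sin_sub, Real.sin_add]
  ring

lemma adj_iff (c p : ℤ × ℤ) :
    adj c p ↔ (p.1 = c.1 - 1 ∧ p.2 = c.2) ∨ (p.1 = c.1 + 1 ∧ p.2 = c.2)
      ∨ (p.1 = c.1 ∧ p.2 = c.2 - 1) ∨ (p.1 = c.1 ∧ p.2 = c.2 + 1) := by
  unfold adj
  constructor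
  · intro h
    have h1 : -1 ≤ c.1 - p.1 := by nlinarith [sq_nonneg (c.2 - p.2), sq_nonneg (c.1 - p.1 + 1)]
    have h2 : c.1 - p.1 ≤ 1 := by nlinarith [sq_nonneg (c.2 - p.2), sq_nonneg (c.1 - p.1 - 1)]
    have h3 : -1 ≤ c.2 - p.2 := by nlinarith [sq_nonneg (c.1 - p.1), sq_nonneg (c.2 - p.2 + 1)]
    have h4 : c.2 - p.2 ≤ 1 := by nlinarith [sq_nonneg (c.1 - p.1), sq_nonneg (c.2 - p.2 - 1)]
    have hu : c.1 - p.1 = -1 ∨ c.1 - p.1 = 0 ∨ c.1 - p.1 = 1 := by omega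
    have hv : c.2 - p.2 = -1 ∨ c.2 - p.2 = 0 ∨ c.2 - p.2 = 1 := by omega
    rcases hu with hu|hu|hu <;> rcases hv with hv|hv|hv <;>
      first
        | omega
        | (exfalso; rw [hu, hv] at h; norm_num at h)
  · rintro (⟨h1,h2⟩|⟨h1,h2⟩|⟨h1,h2⟩|⟨h1,h2⟩) <;> rw [h1, h2] <;> ring

lemma adj_irrefl (p : ℤ × ℤ) : ¬ adj p p := by unfold adj; simp

lemma coord_injective (n : ℕ) : Function.Injective (coord n) := by
  intro y y' h
  simp only [coord, Prod.ext_iff] at h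
  obtain ⟨h1, h2⟩ := h
  have e1 : (y.1 : ℕ) = (y'.1 : ℕ) := by omega
  have e2 : (y.2 : ℕ) = (y'.2 : ℕ) := by omega
  exact Prod.ext (Fin.ext e1) (Fin.ext e2)

/-- The key neighbor-sum computation. -/
lemma nbr_sum (n : ℕ) (hn : 2 ≤ n) (j k : Fin (n-1)) (x : Lam n) :
    ∑ y : Lam n, (if adj (coord n x) (coord n y) then psi n j k y else 0)
      = 2 * (Real.cos (Real.pi * ((j:ℕ)+1) / n) + Real.cos (Real.pi * ((k:ℕ)+1) / n))
          * psi n j k x := by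
  set c : ℤ × ℤ := coord n x with hc
  set Ψ : ℤ × ℤ → ℝ := fun p => SZ n j p.1 * SZ n k p.2 with hΨ
  set F : ℤ × ℤ → ℝ := fun p => if adj c p then Ψ p else 0 with hF
  have hpsiΨ : ∀ y : Lam n, psi n j k y = Ψ (coord n y) := by
    intro y
    simp only [hΨ, psi, coord, sv_eq_SZ]
  -- bounds of c
  have hcx1 : 1 ≤ c.1 ∧ c.1 ≤ (n:ℤ) - 1 := by
    constructor <;> · simp only [hc, coord]; have := x.1.isLt; omega
  have hcx2 : 1 ≤ c.2 ∧ c.2 ≤ (n:ℤ) - 1 := by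
    constructor <;> · simp only [hc, coord]; have := x.2.isLt; omega
  -- vanishing at boundary
  have hΨ0 : ∀ p : ℤ × ℤ, (p.1 = 0 ∨ p.1 = (n:ℤ) ∨ p.2 = 0 ∨ p.2 = (n:ℤ)) → Ψ p = 0 := by
    rintro p (h|h|h|h) <;> simp only [hΨ] <;> rw [h] <;>
      simp [SZ_zero, SZ_n n hn]
  -- step 1: sum over Lam = sum over image box
  set B : Finset (ℤ × ℤ) := Finset.image (coord n) Finset.univ with hB
  have hmemB : ∀ p : ℤ × ℤ, p ∈ B ↔ (1 ≤ p.1 ∧ p.1 ≤ (n:ℤ) - 1 ∧ 1 ≤ p.2 ∧ p.2 ≤ (n:ℤ) - 1) := by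
    intro p
    rw [hB, Finset.mem_image]
    constructor
    · rintro ⟨y, -, rfl⟩
      have := y.1.isLt; have := y.2.isLt
      simp only [coord]
      omega
    · rintro ⟨k1, k2, k3, k4⟩
      have hb1 : (p.1 - 1).toNat < n - 1 := by omega
      have hb2 : (p.2 - 1).toNat < n - 1 := by omega
      refine ⟨(⟨(p.1 - 1).toNat, hb1⟩, ⟨(p.2 - 1).toNat, hb2⟩), Finset.mem_univ _, ?_⟩
      simp only [coord, Prod.ext_iff]
      constructor <;> · simp; omega
  have hstep1 : ∑ y : Lam n, (if adj c (coord n y) then psi n j k y else 0)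
      = ∑ p ∈ B, F p := by
    rw [hB, Finset.sum_image (fun y _ y' _ h => coord_injective n h)]
    apply Finset.sum_congr rfl
    intro y _
    rw [hF, hpsiΨ]
  -- N4
  set p1 : ℤ × ℤ := (c.1 - 1, c.2) with hp1
  set p2 : ℤ × ℤ := (c.1 + 1, c.2) with hp2
  set p3 : ℤ × ℤ := (c.1, c.2 - 1) with hp3
  set p4 : ℤ × ℤ := (c.1, c.2 + 1) with hp4
  set N4 : Finset (ℤ × ℤ) := {p1, p2, p3, p4} with hN4
  have hmemN4 : ∀ p : ℤ × ℤ, p ∈ N4 ↔ adj c p := by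
    intro p
    rw [hN4, adj_iff]
    simp only [Finset.mem_insert, Finset.mem_singleton, hp1, hp2, hp3, hp4, Prod.ext_iff] <;>
      tauto
  have hstep2 : ∑ p ∈ B, F p = ∑ p ∈ B ∪ N4, F p := by
    apply Finset.sum_subset Finset.subset_union_left
    intro p hpu hpB
    show (if adj c p then Ψ p else 0) = 0
    by_cases hadj : adj c p
    · rw [if_pos hadj]
      apply hΨ0
      have hpN4 := (hmemN4 p).mpr hadj
      rw [hmemB] at hpB
      simp only [hN4, Finset.mem_insert, Finset.mem_singleton] at hpN4
      rcases hpN4 with rfl | rfl | rfl | rfl <;>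
        simp [hp1, hp2, hp3, hp4] at hpB ⊢ <;> omega
    · rw [if_neg hadj]
  have hstep3 : ∑ p ∈ N4, F p = ∑ p ∈ B ∪ N4, F p := by
    apply Finset.sum_subset Finset.subset_union_right
    intro p hpu hpN4
    show (if adj c p then Ψ p else 0) = 0
    rw [if_neg (fun hadj => hpN4 ((hmemN4 p).mpr hadj))]
  have hFN4 : ∑ p ∈ N4, F p = Ψ p1 + Ψ p2 + Ψ p3 + Ψ p4 := by
    have hd12 : p1 ≠ p2 := by simp [hp1, hp2, Prod.ext_iff] <;> omega
    have hd13 : p1 ≠ p3 := by simp [hp1, hp3, Prod.ext_iff] <;> omega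
    have hd14 : p1 ≠ p4 := by simp [hp1, hp4, Prod.ext_iff] <;> omega
    have hd23 : p2 ≠ p3 := by simp [hp2, hp3, Prod.ext_iff] <;> omega
    have hd24 : p2 ≠ p4 := by simp [hp2, hp4, Prod.ext_iff] <;> omega
    have hd34 : p3 ≠ p4 := by simp [hp3, hp4, Prod.ext_iff] <;> omega
    have hFeq : ∀ p ∈ N4, F p = Ψ p := by
      intro p hp
      show (if adj c p then Ψ p else 0) = Ψ p
      rw [if_pos ((hmemN4 p).mp hp)]
    rw [Finset.sum_congr rfl hFeq, hN4]
    rw [Finset.sum_insert (by simp [hd12, hd13, hd14]),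
        Finset.sum_insert (by simp [hd23, hd24]),
        Finset.sum_insert (by simp [hd34]),
        Finset.sum_singleton]
    ring
  -- trig
  have htrig : Ψ p1 + Ψ p2 + Ψ p3 + Ψ p4
      = 2 * (Real.cos (Real.pi * ((j:ℕ)+1) / n) + Real.cos (Real.pi * ((k:ℕ)+1) / n))
          * psi n j k x := by
    have e1 : Ψ p1 + Ψ p2 = (SZ n j (c.1 - 1) + SZ n j (c.1 + 1)) * SZ n k c.2 := by
      simp only [hΨ, hp1, hp2]; ring
    have e2 : Ψ p3 + Ψ p4 = SZ n j c.1 * (SZ n k (c.2 - 1) + SZ n k (c.2 + 1)) := by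
      simp only [hΨ, hp3, hp4]; ring
    have hx : psi n j k x = SZ n j c.1 * SZ n k c.2 := hpsiΨ x
    calc Ψ p1 + Ψ p2 + Ψ p3 + Ψ p4
        = (SZ n j (c.1 - 1) + SZ n j (c.1 + 1)) * SZ n k c.2
          + SZ n j c.1 * (SZ n k (c.2 - 1) + SZ n k (c.2 + 1)) := by
            rw [← e1, ← e2]; ring
      _ = (2 * Real.cos (Real.pi * ((j:ℕ)+1) / n) * SZ n j c.1) * SZ n k c.2
          + SZ n j c.1 * (2 * Real.cos (Real.pi * ((k:ℕ)+1) / n) * SZ n k c.2) := by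
            rw [SZ_rec, SZ_rec]
      _ = 2 * (Real.cos (Real.pi * ((j:ℕ)+1) / n) + Real.cos (Real.pi * ((k:ℕ)+1) / n))
          * psi n j k x := by rw [hx]; ring
  rw [hstep1, hstep2, ← hstep3, hFN4, htrig]

lemma eigen (n : ℕ) (hn : 2 ≤ n) (j k : Fin (n-1)) :
    (Delta n).mulVec (psi n j k) = (-(lam2 n j k)) • psi n j k := by
  funext x
  have hsplit : ∀ y : Lam n, Delta n x y
      = (if x = y then (-1:ℝ) else 0) + (if adj (coord n x) (coord n y) then (1:ℝ)/4 else 0) := by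
    intro y
    by_cases hxy : x = y
    · subst hxy
      simp [Delta, adj_irrefl]
    · simp [Delta, hxy]
  have : (Delta n).mulVec (psi n j k) x = ∑ y, Delta n x y * psi n j k y := by
    rw [Matrix.mulVec, dotProduct]
  rw [this, Finset.sum_congr rfl (fun y _ => by rw [hsplit y])]
  have hsum : ∑ y : Lam n, ((if x = y then (-1:ℝ) else 0)
        + (if adj (coord n x) (coord n y) then (1:ℝ)/4 else 0)) * psi n j k y
      = (∑ y : Lam n, (if x = y then (-1:ℝ) else 0) * psi n j k y)
        + ∑ y : Lam n, (if adj (coord n x) (coord n y) then (1:ℝ)/4 else 0) * psi n j k y := by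
    rw [← Finset.sum_add_distrib]
    apply Finset.sum_congr rfl
    intro y _
    ring
  rw [hsum]
  have h1 : ∑ y : Lam n, (if x = y then (-1:ℝ) else 0) * psi n j k y = -psi n j k x := by
    rw [Finset.sum_congr rfl (fun y _ => by rw [ite_mul, zero_mul])]
    rw [Finset.sum_ite_eq]
    simp
  have h2 : ∑ y : Lam n, (if adj (coord n x) (coord n y) then (1:ℝ)/4 else 0) * psi n j k y
      = (1/4) * ∑ y : Lam n, (if adj (coord n x) (coord n y) then psi n j k y else 0) := by
    rw [Finset.mul_sum]
    apply Finset.sum_congr rfl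
    intro y _
    by_cases h : adj (coord n x) (coord n y) <;> simp [h]
  rw [h1, h2, nbr_sum n hn j k x]
  simp only [lam2, lam1, Pi.smul_apply, smul_eq_mul]
  ring

lemma exp_mulVec_eigen {ι : Type*} [Fintype ι] [DecidableEq ι]
    (A : Matrix ι ι ℝ) (v : ι → ℝ) (μ : ℝ) (h : A.mulVec v = μ • v) :
    (NormedSpace.exp A).mulVec v = Real.exp μ • v := by
  letI : SeminormedRing (Matrix ι ι ℝ) := Matrix.linftyOpSemiNormedRing
  letI : NormedRing (Matrix ι ι ℝ) := Matrix.linftyOpNormedRing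
  letI : NormedAlgebra ℝ (Matrix ι ι ℝ) := Matrix.linftyOpNormedAlgebra
  have hpow : ∀ m : ℕ, (A ^ m).mulVec v = (μ ^ m) • v := by
    intro m
    induction m with
    | zero => simp [Matrix.one_mulVec]
    | succ m ih =>
        rw [pow_succ', ← Matrix.mulVec_mulVec, ih, Matrix.mulVec_smul, h, smul_smul, pow_succ',
          mul_comm (μ ^ m) μ]
  have hsum : Summable (fun m : ℕ => ((m.factorial : ℝ))⁻¹ • A ^ m) :=
    NormedSpace.expSeries_summable' (𝕂 := ℝ) A
  let L0 : Matrix ι ι ℝ →ₗ[ℝ] (ι → ℝ) :=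
    { toFun := fun M => M.mulVec v
      map_add' := fun M N => Matrix.add_mulVec M N v
      map_smul' := fun c M => Matrix.smul_mulVec c M v }
  let L : Matrix ι ι ℝ →L[ℝ] (ι → ℝ) := LinearMap.toContinuousLinearMap L0
  have hexp : NormedSpace.exp A = ∑' m : ℕ, ((m.factorial : ℝ))⁻¹ • A ^ m := by
    rw [NormedSpace.exp_eq_tsum ℝ]
  have key : (NormedSpace.exp A).mulVec v
      = ∑' m : ℕ, ((m.factorial : ℝ))⁻¹ • ((μ ^ m) • v) := by
    have : (NormedSpace.exp A).mulVec v = L (∑' m : ℕ, ((m.factorial : ℝ))⁻¹ • A ^ m) := by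
      rw [hexp]; rfl
    rw [this, L.map_tsum hsum]
    congr 1
    funext m
    show L0 (((m.factorial : ℝ))⁻¹ • A ^ m) = _
    rw [map_smul]
    simp only [L0, LinearMap.coe_mk, AddHom.coe_mk, hpow m]
  rw [key]
  have hμ : Summable (fun m : ℕ => ((m.factorial : ℝ))⁻¹ • μ ^ m) :=
    NormedSpace.expSeries_summable' (𝕂 := ℝ) μ
  calc ∑' m : ℕ, ((m.factorial : ℝ))⁻¹ • ((μ ^ m) • v)
      = ∑' m : ℕ, (((m.factorial : ℝ))⁻¹ * μ ^ m) • v := by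
        congr 1; funext m; rw [smul_smul]
    _ = (∑' m : ℕ, ((m.factorial : ℝ))⁻¹ * μ ^ m) • v := by
        exact Summable.tsum_smul_const (by simpa using hμ) v
    _ = Real.exp μ • v := by
        congr 1
        rw [Real.exp_eq_exp_ℝ, NormedSpace.exp_eq_tsum ℝ]
        simp [smul_eq_mul]

lemma cf_bound (n : ℕ) (hn : 2 ≤ n) (j : Fin (n-1)) : |cf n j| ≤ 2 := by
  have hn0 : (0:ℝ) < n := by positivity
  have hsig : |sig n j| ≤ (n:ℝ) := by
    calc |sig n j| ≤ ∑ a, |sv n j a| := Finset.abs_sum_le_sum_abs _ _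
      _ ≤ ∑ _a : Fin (n-1), (1:ℝ) := by
          apply Finset.sum_le_sum
          intro a _
          exact Real.abs_sin_le_one _
      _ = (n - 1 : ℕ) := by simp
      _ ≤ (n:ℝ) := by
          have : (n - 1 : ℕ) ≤ n := by omega
          exact_mod_cast this
  rw [cf, abs_mul]
  have h2 : |(2:ℝ)/n| = 2/n := abs_of_pos (by positivity)
  rw [h2]
  calc (2/n) * |sig n j| ≤ (2/n) * n := by
        apply mul_le_mul_of_nonneg_left hsig (by positivity)
    _ = 2 := by field_simp

lemma lam1_lb (n : ℕ) (hn : 2 ≤ n) (j : Fin (n-1)) :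
    2 * (((j:ℕ)+1 : ℝ)/n)^2 ≤ lam1 n j := by
  have hn0 : (0:ℝ) < n := by positivity
  set J : ℝ := ((j:ℕ)+1 : ℝ) with hJ
  have hJ1 : 1 ≤ J := by rw [hJ]; exact_mod_cast Nat.one_le_iff_ne_zero.mpr (by omega)
  have hJn : J ≤ (n:ℝ) := by
    rw [hJ]
    have : (j:ℕ) + 1 ≤ n := by have := j.isLt; omega
    exact_mod_cast this
  set u : ℝ := Real.pi * J / (2*n) with hu
  have hu0 : 0 ≤ u := by positivity
  have hupi : u ≤ Real.pi / 2 := by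
    rw [hu, div_le_div_iff₀ (by positivity) (by norm_num)]
    nlinarith [Real.pi_pos]
  have hsin : J / n ≤ Real.sin u := by
    have := Real.mul_le_sin hu0 hupi
    calc J / n = 2/Real.pi * u := by
          rw [hu]; field_simp
        _ ≤ Real.sin u := this
  have hcos : Real.cos (Real.pi * J / n) = 1 - 2 * Real.sin u ^ 2 := by
    have h2u : Real.pi * J / n = 2 * u := by rw [hu]; field_simp
    rw [h2u, Real.cos_two_mul]
    have := Real.sin_sq_add_cos_sq u
    nlinarith
  rw [lam1, ← hJ, hcos]
  have hJn' : 0 ≤ J / n := by positivity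
  nlinarith [hsin]

lemma lamOne_le_lam1 (n : ℕ) (hn : 2 ≤ n) (j : Fin (n-1)) : lamOne n ≤ lam1 n j := by
  rw [lamOne, lam1]
  have hn0 : (0:ℝ) < n := by positivity
  have h1 : Real.cos (Real.pi * ((j:ℕ)+1) / n) ≤ Real.cos (Real.pi / n) := by
    apply Real.cos_le_cos_of_nonneg_of_le_pi (by positivity)
    · rw [div_le_iff₀ hn0]
      have hjn : ((j:ℕ):ℝ) + 1 ≤ (n:ℝ) := by
        have hlt := j.isLt
        have : (j:ℕ) + 1 ≤ n := by omega
        exact_mod_cast this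
      nlinarith [Real.pi_pos]
    · rw [div_le_div_iff₀ hn0 hn0]
      have h9 : (0:ℝ) ≤ Real.pi * ((j:ℕ):ℝ) * n := by positivity
      nlinarith [Real.pi_pos]
  linarith

lemma lamOne_nonneg (n : ℕ) (hn : 2 ≤ n) : 0 ≤ lamOne n := by
  rw [lamOne]
  have := Real.cos_le_one (Real.pi / n)
  linarith

lemma texp_bound (n : ℕ) (hn : 2 ≤ n) (j k : Fin (n-1)) (t : ℝ) (ht : (n:ℝ)^2 ≤ t) :
    Real.exp (-(t * lam2 n j k))
      ≤ Real.exp (-(lamOne n * (t - (n:ℝ)^2)))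
        * Real.exp (-1) ^ ((j:ℕ)+1) * Real.exp (-1) ^ ((k:ℕ)+1) := by
  have hn0 : (0:ℝ) < n := by positivity
  set J : ℝ := ((j:ℕ)+1 : ℝ) with hJdef
  set K : ℝ := ((k:ℕ)+1 : ℝ) with hKdef
  have hJ1 : 1 ≤ J := by
    rw [hJdef]
    have : (0:ℝ) ≤ ((j:ℕ):ℝ) := Nat.cast_nonneg _
    linarith
  have hK1 : 1 ≤ K := by
    rw [hKdef]
    have : (0:ℝ) ≤ ((k:ℕ):ℝ) := Nat.cast_nonneg _
    linarith
  have hlam2_lb : (J^2 + K^2)/(n:ℝ)^2 ≤ lam2 n j k := by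
    have h1 := lam1_lb n hn j
    have h2 := lam1_lb n hn k
    rw [lam2]
    have e1 : 2 * (J/n)^2 = 2*J^2/(n:ℝ)^2 := by field_simp
    have e2 : 2 * (K/n)^2 = 2*K^2/(n:ℝ)^2 := by field_simp
    rw [e1] at h1; rw [e2] at h2
    have : (2*J^2/(n:ℝ)^2 + 2*K^2/(n:ℝ)^2)/2 = (J^2+K^2)/(n:ℝ)^2 := by field_simp
    linarith
  have hlamOne := lamOne_le_lam1 n hn j
  have hlam2_ge : lamOne n ≤ lam2 n j k := by
    have := lamOne_le_lam1 n hn k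
    rw [lam2]; linarith
  have hkey : lamOne n * (t - (n:ℝ)^2) + J + K ≤ t * lam2 n j k := by
    have h1 : (t - (n:ℝ)^2) * lamOne n ≤ (t - (n:ℝ)^2) * lam2 n j k :=
      mul_le_mul_of_nonneg_left hlam2_ge (by linarith)
    have h2 : J + K ≤ (n:ℝ)^2 * lam2 n j k := by
      have h3 : (n:ℝ)^2 * ((J^2+K^2)/(n:ℝ)^2) ≤ (n:ℝ)^2 * lam2 n j k :=
        mul_le_mul_of_nonneg_left hlam2_lb (by positivity)
      have h4 : (n:ℝ)^2 * ((J^2+K^2)/(n:ℝ)^2) = J^2 + K^2 := by field_simp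
      have hJJ : J ≤ J^2 := by nlinarith
      have hKK : K ≤ K^2 := by nlinarith
      calc J + K ≤ J^2 + K^2 := by linarith
        _ = (n:ℝ)^2 * ((J^2+K^2)/(n:ℝ)^2) := h4.symm
        _ ≤ (n:ℝ)^2 * lam2 n j k := h3
    nlinarith
  calc Real.exp (-(t * lam2 n j k))
      ≤ Real.exp (-(lamOne n * (t - (n:ℝ)^2) + J + K)) := by
        apply Real.exp_le_exp.mpr; linarith
    _ = Real.exp (-(lamOne n * (t - (n:ℝ)^2)))
        * Real.exp (-1) ^ ((j:ℕ)+1) * Real.exp (-1) ^ ((k:ℕ)+1) := by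
        rw [← Real.exp_nat_mul, ← Real.exp_nat_mul, ← Real.exp_add, ← Real.exp_add]
        congr 1
        push_cast
        ring

lemma geom_bound (n : ℕ) (hn : 2 ≤ n) :
    ∑ j : Fin (n-1), Real.exp (-1) ^ ((j:ℕ)+1) ≤ 1 := by
  set r : ℝ := Real.exp (-1) with hr
  have hr0 : 0 < r := Real.exp_pos _
  have hrhalf : r ≤ 1/2 := by
    rw [hr, Real.exp_neg]
    rw [inv_le_comm₀ (Real.exp_pos 1) (by norm_num)]
    have := Real.exp_one_gt_d9
    norm_num
    linarith
  have key : ∀ m : ℕ, ∑ i ∈ Finset.range m, r ^ (i+1) ≤ 1 - r^m := by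
    intro m
    induction m with
    | zero => simp
    | succ m ih =>
        rw [Finset.sum_range_succ]
        have hpow : 0 ≤ r^m := by positivity
        have : 2 * r^(m+1) ≤ r^m := by
          rw [pow_succ]
          nlinarith
        linarith
  rw [Fin.sum_univ_eq_sum_range (fun i => r ^ (i+1)) (n-1)]
  have := key (n-1)
  have hpow : 0 ≤ r^(n-1) := by positivity
  linarith

lemma adj_symm_iff (p q : ℤ × ℤ) : adj p q ↔ adj q p := by
  unfold adj
  constructor <;> intro h <;> nlinarith [h]

lemma delta_symm (n : ℕ) : (Delta n).IsSymm := by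
  rw [Matrix.IsSymm]
  ext x y
  rw [Matrix.transpose_apply]
  by_cases hxy : x = y
  · subst hxy; rfl
  · have hyx : ¬ (y = x) := fun h => hxy h.symm
    simp only [Delta, Matrix.of_apply, if_neg hxy, if_neg hyx]
    by_cases hadj : adj (coord n x) (coord n y)
    · rw [if_pos hadj, if_pos ((adj_symm_iff _ _).mp hadj)]
    · rw [if_neg hadj, if_neg (fun h => hadj ((adj_symm_iff _ _).mp h))]

set_option maxHeartbeats 1000000 in
/-- Annealed expectation bound: for nonnegative `f` and `t ≥ n²`,
`∑_x (e^{tΔ_n} f)(x) ≤ C e^{−λ_𝟏(t−n²)} ∑_x f(x)`. -/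
theorem annealed_expectation_bound :
    ∃ C : ℝ, 0 < C ∧ ∀ n : ℕ, 2 ≤ n → ∀ f : Lam n → ℝ, (∀ x, 0 ≤ f x) →
      ∀ t : ℝ, (n : ℝ) ^ 2 ≤ t →
        ∑ x : Lam n, (NormedSpace.exp (t • Delta n)).mulVec f x
          ≤ C * Real.exp (-(lamOne n) * (t - (n : ℝ) ^ 2)) * ∑ x : Lam n, f x := by
  refine ⟨4, by norm_num, ?_⟩
  intro n hn f hf t ht
  set E := NormedSpace.exp (t • Delta n) with hE
  set R : ℝ := Real.exp (-(lamOne n * (t - (n:ℝ)^2))) with hR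
  have hR0 : 0 < R := Real.exp_pos _
  have hsymm : E.IsSymm := by
    rw [hE]
    apply Matrix.IsSymm.exp
    rw [Matrix.IsSymm, Matrix.transpose_smul]
    rw [delta_symm n]
  have hEapp : ∀ a b : Lam n, E a b = E b a := by
    intro a b
    have h := congrFun (congrFun hsymm b) a
    rwa [Matrix.transpose_apply] at h
  have stepA : ∑ x : Lam n, E.mulVec f x
      = ∑ y : Lam n, (E.mulVec (fun _ => 1) y) * f y := by
    have h1 : ∀ x : Lam n, E.mulVec f x = ∑ y, E x y * f y := fun x => by
      rw [Matrix.mulVec, dotProduct]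
    have h2 : ∀ y : Lam n, E.mulVec (fun _ => 1) y = ∑ x, E y x := fun y => by
      rw [Matrix.mulVec, dotProduct]
      simp
    rw [Finset.sum_congr rfl (fun x _ => h1 x), Finset.sum_comm]
    apply Finset.sum_congr rfl
    intro y _
    rw [h2, Finset.sum_mul]
    apply Finset.sum_congr rfl
    intro x _
    rw [hEapp x y]
  have eigE : ∀ j k : Fin (n-1),
      E.mulVec (psi n j k) = Real.exp (-(t * lam2 n j k)) • psi n j k := by
    intro j k
    rw [hE]
    apply exp_mulVec_eigen
    rw [Matrix.smul_mulVec, eigen n hn j k, smul_smul]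
    congr 1
    ring
  have honeExpand : (∑ j : Fin (n-1), ∑ k : Fin (n-1), (cf n j * cf n k) • psi n j k)
      = (fun _ : Lam n => (1:ℝ)) := by
    funext x
    have h := oneExpand n hn x
    calc (∑ j : Fin (n-1), ∑ k : Fin (n-1), (cf n j * cf n k) • psi n j k) x
        = ∑ j, ∑ k, (cf n j * cf n k) * psi n j k x := by
          rw [Finset.sum_apply]
          apply Finset.sum_congr rfl
          intro j _
          rw [Finset.sum_apply]
          apply Finset.sum_congr rfl
          intro k _
          rfl
      _ = 1 := h
  have hmvsum : ∀ (g : Fin (n-1) → Lam n → ℝ),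
      E.mulVec (∑ j, g j) = ∑ j, E.mulVec (g j) := by
    intro g
    simp only [← Matrix.mulVecLin_apply]
    exact map_sum (Matrix.mulVecLin E) g Finset.univ
  have hmv : E.mulVec (fun _ => 1)
      = ∑ j : Fin (n-1), ∑ k : Fin (n-1),
          ((cf n j * cf n k) * Real.exp (-(t * lam2 n j k))) • psi n j k := by
    rw [← honeExpand, hmvsum]
    apply Finset.sum_congr rfl
    intro j _
    rw [hmvsum]
    apply Finset.sum_congr rfl
    intro k _
    rw [Matrix.mulVec_smul, eigE j k, smul_smul]
  set r : ℝ := Real.exp (-1) with hrdef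
  have hr0 : (0:ℝ) < r := Real.exp_pos _
  set S : ℝ := ∑ j : Fin (n-1), r ^ ((j:ℕ)+1) with hSdef
  have hS1 : S ≤ 1 := geom_bound n hn
  have hS0 : 0 ≤ S := by
    rw [hSdef]
    apply Finset.sum_nonneg
    intro j _
    positivity
  have stepB : ∀ y : Lam n, E.mulVec (fun _ => 1) y ≤ 4 * R := by
    intro y
    rw [hmv]
    have hev : (∑ j : Fin (n-1), ∑ k : Fin (n-1),
          ((cf n j * cf n k) * Real.exp (-(t * lam2 n j k))) • psi n j k) y
        = ∑ j : Fin (n-1), ∑ k : Fin (n-1),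
          ((cf n j * cf n k) * Real.exp (-(t * lam2 n j k))) * psi n j k y := by
      rw [Finset.sum_apply]
      apply Finset.sum_congr rfl
      intro j _
      rw [Finset.sum_apply]
      apply Finset.sum_congr rfl
      intro k _
      rfl
    rw [hev]
    have hpsi_abs : ∀ j k : Fin (n-1), |psi n j k y| ≤ 1 := by
      intro j k
      rw [psi, abs_mul]
      have h1 : |sv n j y.1| ≤ 1 := by rw [sv]; exact Real.abs_sin_le_one _
      have h2 : |sv n k y.2| ≤ 1 := by rw [sv]; exact Real.abs_sin_le_one _
      nlinarith [abs_nonneg (sv n j y.1), abs_nonneg (sv n k y.2)]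
    have hterm : ∀ j k : Fin (n-1),
        ((cf n j * cf n k) * Real.exp (-(t * lam2 n j k))) * psi n j k y
          ≤ 4 * R * (r ^ ((j:ℕ)+1) * r ^ ((k:ℕ)+1)) := by
      intro j k
      have h1 := cf_bound n hn j
      have h2 := cf_bound n hn k
      have h3 := texp_bound n hn j k t ht
      have h4 := hpsi_abs j k
      calc ((cf n j * cf n k) * Real.exp (-(t * lam2 n j k))) * psi n j k y
          ≤ |((cf n j * cf n k) * Real.exp (-(t * lam2 n j k))) * psi n j k y| :=
            le_abs_self _
        _ = |cf n j| * |cf n k| * Real.exp (-(t * lam2 n j k)) * |psi n j k y| := by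
            rw [abs_mul, abs_mul, abs_mul, abs_of_pos (Real.exp_pos _)]
        _ ≤ 2 * 2 * (R * r ^ ((j:ℕ)+1) * r ^ ((k:ℕ)+1)) * 1 := by
            gcongr <;> positivity
        _ = 4 * R * (r ^ ((j:ℕ)+1) * r ^ ((k:ℕ)+1)) := by ring
    calc ∑ j : Fin (n-1), ∑ k : Fin (n-1),
          ((cf n j * cf n k) * Real.exp (-(t * lam2 n j k))) * psi n j k y
        ≤ ∑ j : Fin (n-1), ∑ k : Fin (n-1),
            4 * R * (r ^ ((j:ℕ)+1) * r ^ ((k:ℕ)+1)) := by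
          apply Finset.sum_le_sum
          intro j _
          apply Finset.sum_le_sum
          intro k _
          exact hterm j k
      _ = 4 * R * (S * S) := by
          have hSS : S * S = ∑ j : Fin (n-1), ∑ k : Fin (n-1),
              r ^ ((j:ℕ)+1) * r ^ ((k:ℕ)+1) := Finset.sum_mul_sum _ _ _ _
          rw [hSS, Finset.mul_sum]
          apply Finset.sum_congr rfl
          intro j _
          rw [Finset.mul_sum]
      _ ≤ 4 * R := by
          have hSS : S * S ≤ 1 := by nlinarith
          nlinarith [mul_nonneg hR0.le (sub_nonneg.mpr hSS)]
  calc ∑ x : Lam n, E.mulVec f x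
      = ∑ y : Lam n, (E.mulVec (fun _ => 1) y) * f y := stepA
    _ ≤ ∑ y : Lam n, (4 * R) * f y := by
        apply Finset.sum_le_sum
        intro y _
        exact mul_le_mul_of_nonneg_right (stepB y) (hf y)
    _ = 4 * R * ∑ y : Lam n, f y := by rw [← Finset.mul_sum]
    _ = 4 * Real.exp (-(lamOne n) * (t - (n:ℝ)^2)) * ∑ x : Lam n, f x := by
        rw [hR, neg_mul]

end DGFFStmt
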